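/- Let γ be a C² regular curve in the affine group with ω(γ̇(t)) = 0 and d/dt(ω(γ̇(t))) ≠ 0 at a point t. Then lim_{L→∞} k^L_γ(t)/√L = |d/dt(ω(γ̇(t)))| / ((γ̇₁/γ₁)² + γ̇₃²). -/

import Mathlib

open Filter

/-- Lemma 2.6 (2.15) of the paper.  Let `γ` be a `C²` regular curve in the affine group
with, at a fixed point `t`, `ω(γ̇(t)) = d2/g1 - d3 = 0` and `w' = (d/dt)ω(γ̇(t)) ≠ 0`.
Then `lim_{L→∞} k^L_γ/√L = |w'| / ((d1/g1)² + d3²)`. -/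
theorem affine_curvature_limit_horizontal
    (g1 d1 d2 d3 dd1 dd3 w w' : ℝ)
    (hg1 : 0 < g1)
    (hw : w = d2 / g1 - d3)
    (hreg : ¬(d1 = 0 ∧ d2 = 0 ∧ d3 = 0))
    (hw0 : w = 0) (hw' : w' ≠ 0)
    (a b : ℝ) (ha : a = d1 / g1) (hb : b = d3)
    (A B : ℝ → ℝ) (C : ℝ)
    (hA : ∀ L : ℝ, A L = (dd1 * g1 - d1 ^ 2) / g1 ^ 2 + L * w * (d2 / g1))
    (hB : ∀ L : ℝ, B L = dd3 - L * w * (d1 / g1))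
    (hC : C = w' - w * (d1 / g1)) :
    Tendsto (fun L : ℝ =>
        Real.sqrt ((A L ^ 2 + B L ^ 2 + L * C ^ 2) / (a ^ 2 + b ^ 2 + L * w ^ 2) ^ 2
          - (A L * a + B L * b + L * C * w) ^ 2 / (a ^ 2 + b ^ 2 + L * w ^ 2) ^ 3)
        / Real.sqrt L)
      atTop (nhds (|w'| / ((d1 / g1) ^ 2 + d3 ^ 2))) := by
  have hg1' : g1 ≠ 0 := ne_of_gt hg1
  subst hw0 ha hC
  rw [hb]
  rw [zero_mul, sub_zero] at *
  have hQ : 0 < (d1/g1)^2 + d3^2 := by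
    rcases (lt_or_eq_of_le (by positivity : (0:ℝ) ≤ (d1/g1)^2 + d3^2)) with h | h
    · exact h
    · exfalso
      have h1 : d1/g1 = 0 := by nlinarith [sq_nonneg (d1/g1), sq_nonneg d3]
      have h3 : d3 = 0 := by nlinarith [sq_nonneg (d1/g1), sq_nonneg d3]
      have hd1 : d1 = 0 := by field_simp at h1; simpa using h1
      have hd2 : d2 = 0 := by
        have h2 : d2 / g1 = 0 := by rw [h3] at hw; linarith
        field_simp at h2; simpa using h2
      exact hreg ⟨hd1, hd2, h3⟩
  set Q : ℝ := (d1/g1)^2 + d3^2 with hQdef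
  have hQ' : Q ≠ 0 := ne_of_gt hQ
  set A0 : ℝ := (dd1 * g1 - d1 ^ 2) / g1 ^ 2 with hA0
  set K1 : ℝ := (A0^2 + dd3^2)/Q^2 - (A0*(d1/g1) + dd3*d3)^2/Q^3 with hK1
  have heq : ∀ᶠ L : ℝ in atTop,
      Real.sqrt ((A L ^ 2 + B L ^ 2 + L * w' ^ 2) / (Q + L * 0 ^ 2) ^ 2
          - (A L * (d1/g1) + B L * d3 + L * w' * 0) ^ 2 / (Q + L * 0 ^ 2) ^ 3)
        / Real.sqrt L = Real.sqrt (K1 / L + w'^2 / Q^2) := by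
    filter_upwards [eventually_gt_atTop 0] with L hL
    have hL' : L ≠ 0 := ne_of_gt hL
    have hAL : A L = A0 := by rw [hA]; ring
    have hBL : B L = dd3 := by rw [hB]; ring
    rw [hAL, hBL]
    have harg : (A0 ^ 2 + dd3 ^ 2 + L * w' ^ 2) / (Q + L * 0 ^ 2) ^ 2
          - (A0 * (d1/g1) + dd3 * d3 + L * w' * 0) ^ 2 / (Q + L * 0 ^ 2) ^ 3
        = (K1 / L + w'^2 / Q^2) * L := by
      rw [hK1]; field_simp; ring
    rw [harg, Real.sqrt_mul' _ (le_of_lt hL), mul_div_assoc,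
      div_self (ne_of_gt (Real.sqrt_pos.mpr hL)), mul_one]
  have hlim : Tendsto (fun L : ℝ => Real.sqrt (K1 / L + w'^2 / Q^2)) atTop
      (nhds (|w'| / Q)) := by
    have h1 : Tendsto (fun L : ℝ => K1 / L + w'^2 / Q^2) atTop (nhds (0 + w'^2 / Q^2)) :=
      (tendsto_const_nhds.div_atTop tendsto_id).add tendsto_const_nhds
    rw [zero_add] at h1
    have h2 := (Real.continuous_sqrt.continuousAt (x := w'^2 / Q^2)).tendsto.comp h1
    convert h2 using 2
    · rfl
    rw [Real.sqrt_div (sq_nonneg w'), Real.sqrt_sq_eq_abs, Real.sqrt_sq_eq_abs,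
      abs_of_pos hQ]
  exact hlim.congr' (Filter.EventuallyEq.symm heq)
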